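/- (Extension lemma.) Let H ≤ G = ∏_{x∈E} Γ_x and S ⊆ E. For an irreducible representation ρ = ⊗_{x∈S} ρ_x of G_S = ∏_{x∈S} Γ_x, let ρ̄ be its extension to G obtained by tensoring with trivial representations on coordinates outside S. Then ρ occurs in ℂ[G_S / H_S] if and only if ρ̄ occurs in ℂ[G/H], where H_S = π_S(H). -/

import Mathlib

/-- Coordinate projection of a product of groups onto the coordinates in `S`. -/
def proj {E : Type} (Γ : E → Type) [∀ x, Group (Γ x)] (S : Finset E) :
    (∀ x, Γ x) →* (∀ x : S, Γ x) :=
  Pi.monoidHom fun i => Pi.evalMonoidHom Γ i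

/-- A linear map intertwining two representations. -/
def IsEquivariant {k G V W : Type} [CommSemiring k] [Monoid G]
    [AddCommMonoid V] [Module k V] [AddCommMonoid W] [Module k W]
    (ρ : Representation k G V) (σ : Representation k G W) (f : V →ₗ[k] W) : Prop :=
  ∀ g : G, f ∘ₗ ρ g = σ g ∘ₗ f

/-- `ρ` occurs in `σ` if there is a nonzero equivariant map `ρ → σ`. -/
def Occurs {k G V W : Type} [CommSemiring k] [Monoid G]
    [AddCommMonoid V] [Module k V] [AddCommMonoid W] [Module k W]
    (ρ : Representation k G V) (σ : Representation k G W) : Prop :=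
  ∃ f : V →ₗ[k] W, f ≠ 0 ∧ IsEquivariant ρ σ f

/-- Irreducibility of a representation. -/
def IsIrred {k G V : Type} [CommSemiring k] [Monoid G]
    [AddCommMonoid V] [Module k V] (ρ : Representation k G V) : Prop :=
  Nontrivial V ∧
    ∀ p : Submodule k V, (∀ g : G, ∀ v ∈ p, ρ g v ∈ p) → p = ⊥ ∨ p = ⊤

section aux0
set_option linter.unusedSectionVars false

/-- Finsupp model of the permutation representation. -/
noncomputable def ofMA (k G H : Type) [CommSemiring k] [Monoid G] [MulAction G H] :
    Representation k G (H →₀ k) where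
  toFun g := (MonoidAlgebra.coeffLinearEquiv k).toLinearMap ∘ₗ
    Representation.ofMulAction k G H g ∘ₗ (MonoidAlgebra.coeffLinearEquiv k).symm.toLinearMap
  map_one' := by ext; simp
  map_mul' x y := by ext; simp [map_mul]

lemma ofMA_def (k G H : Type) [CommSemiring k] [Monoid G] [MulAction G H] (g : G) :
    ofMA k G H g = Finsupp.lmapDomain k k (g • ·) := by
  ext; simp [ofMA, Representation.ofMulAction_def]

lemma occurs_ofMA {k G V H : Type} [CommSemiring k] [Monoid G] [MulAction G H]
    [AddCommMonoid V] [Module k V] (ρ : Representation k G V) :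
    Occurs ρ (Representation.ofMulAction k G H) ↔ Occurs ρ (ofMA k G H) := by
  constructor
  · rintro ⟨f, hf0, hf⟩
    refine ⟨(MonoidAlgebra.coeffLinearEquiv k).toLinearMap ∘ₗ f, ?_, ?_⟩
    · intro h; apply hf0; refine LinearMap.ext fun v => ?_
      have := congrArg (fun T => (MonoidAlgebra.coeffLinearEquiv k).symm (T v)) h
      simpa using this
    · intro g
      ext v
      have := congrArg (fun T => T v) (hf g)
      simp only [LinearMap.comp_apply] at this
      simp [ofMA, this]
  · rintro ⟨f, hf0, hf⟩
    refine ⟨(MonoidAlgebra.coeffLinearEquiv k).symm.toLinearMap ∘ₗ f, ?_, ?_⟩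
    · intro h; apply hf0; refine LinearMap.ext fun v => ?_
      have := congrArg (fun T => (MonoidAlgebra.coeffLinearEquiv k) (T v)) h
      simpa using this
    · intro g
      ext v
      have := congrArg (fun T => (MonoidAlgebra.coeffLinearEquiv k).symm (T v)) (hf g)
      simp only [LinearMap.comp_apply] at this
      simp [ofMA] at this
      simp [this]

end aux0

section aux
open Finsupp
set_option linter.unusedSectionVars false
variable {E : Type} [DecidableEq E]
  {Γ : E → Type} [∀ x, Group (Γ x)]
  (H : Subgroup (∀ x, Γ x)) (S : Finset E)

lemma proj_surjective : Function.Surjective (proj Γ S) := by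
  intro gS
  refine ⟨fun x => if h : x ∈ S then gS ⟨x, h⟩ else 1, ?_⟩
  funext i
  show (fun x => if h : x ∈ S then gS ⟨x, h⟩ else 1) (i : E) = gS i
  simp only [i.2, dif_pos]

noncomputable def qbar : ((∀ x, Γ x) ⧸ H) → ((∀ x : S, Γ x) ⧸ Subgroup.map (proj Γ S) H) :=
  Quotient.map' (proj Γ S) (fun a b hab => by
    rw [QuotientGroup.leftRel_apply] at *
    exact ⟨a⁻¹ * b, hab, by simp⟩)

lemma qbar_mk (g : ∀ x, Γ x) : qbar H S (QuotientGroup.mk g) = QuotientGroup.mk (proj Γ S g) := rfl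

lemma qbar_smul (g : ∀ x, Γ x) (x : (∀ x, Γ x) ⧸ H) :
    qbar H S (g • x) = proj Γ S g • qbar H S x := by
  induction x using Quotient.inductionOn' with
  | h a => rfl

lemma qbar_surjective : Function.Surjective (qbar H S) := by
  intro y
  induction y using Quotient.inductionOn' with
  | h a =>
    obtain ⟨g, hg⟩ := proj_surjective S a
    exact ⟨QuotientGroup.mk g, by rw [qbar_mk, hg]⟩

lemma qbar_fiber {x y : (∀ x, Γ x) ⧸ H} (hxy : qbar H S x = qbar H S y) :
    ∃ k : ∀ x, Γ x, proj Γ S k = 1 ∧ y = k • x := by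
  induction x using Quotient.inductionOn' with
  | h g =>
  induction y using Quotient.inductionOn' with
  | h g' =>
    rw [qbar_mk, qbar_mk] at hxy
    have := QuotientGroup.eq.mp hxy
    obtain ⟨h, hh, hph⟩ := this
    refine ⟨g' * h⁻¹ * g⁻¹, ?_, ?_⟩
    · have : proj Γ S (g' * h⁻¹ * g⁻¹) = proj Γ S g' * (proj Γ S h)⁻¹ * (proj Γ S g)⁻¹ := by
        simp
      rw [this, hph]; group
    · show QuotientGroup.mk g' = _
      rw [MulAction.Quotient.smul_mk]
      refine (QuotientGroup.eq.mpr ?_)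
      have : g'⁻¹ * ((g' * h⁻¹ * g⁻¹) • g) = h⁻¹ := by
        show g'⁻¹ * (g' * h⁻¹ * g⁻¹ * g) = h⁻¹; group
      show g'⁻¹ * ((g' * h⁻¹ * g⁻¹) • g) ∈ H
      rw [this]
      exact inv_mem hh

end aux

section aux2
open Finsupp
set_option linter.unusedSectionVars false
variable {E : Type} [Fintype E] [DecidableEq E]
  {Γ : E → Type} [∀ x, Group (Γ x)] [∀ x, Fintype (Γ x)]
  (H : Subgroup (∀ x, Γ x)) (S : Finset E)

noncomputable instance : Fintype ((∀ x, Γ x) ⧸ H) := Fintype.ofFinite _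

/-- Transpose of `qbar`: pull back functions along `qbar`. -/
noncomputable def jmap : (((∀ x : S, Γ x) ⧸ Subgroup.map (proj Γ S) H) →₀ ℂ) →ₗ[ℂ]
    (((∀ x, Γ x) ⧸ H) →₀ ℂ) :=
  (Finsupp.linearEquivFunOnFinite ℂ ℂ _).symm.toLinearMap ∘ₗ
    LinearMap.funLeft ℂ ℂ (qbar H S) ∘ₗ Finsupp.lcoeFun

lemma jmap_apply (φ : ((∀ x : S, Γ x) ⧸ Subgroup.map (proj Γ S) H) →₀ ℂ)
    (x : (∀ x, Γ x) ⧸ H) : jmap H S φ x = φ (qbar H S x) := by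
  simp [jmap, LinearMap.funLeft, Finsupp.lcoeFun, Finsupp.linearEquivFunOnFinite]

lemma jmap_injective : Function.Injective (jmap H S) := by
  intro φ ψ hφψ
  ext y
  obtain ⟨x, rfl⟩ := qbar_surjective H S y
  rw [← jmap_apply, ← jmap_apply, hφψ]

lemma jmap_equiv (g : ∀ x, Γ x) :
    jmap H S ∘ₗ ofMA ℂ _ _ (proj Γ S g) =
      ofMA ℂ (∀ x, Γ x) ((∀ x, Γ x) ⧸ H) g ∘ₗ jmap H S := by
  ext φ x
  simp only [LinearMap.comp_apply, ofMA_def, Finsupp.lmapDomain_apply]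
  have hx : x = g • (g⁻¹ • x) := by simp
  rw [hx, Finsupp.mapDomain_apply (MulAction.injective g), jmap_apply, jmap_apply,
    qbar_smul, qbar_smul]
  have : qbar H S x = proj Γ S g • (proj Γ S g)⁻¹ • qbar H S x := by simp
  rw [this, Finsupp.mapDomain_apply (MulAction.injective _)]

lemma qmap_equiv (g : ∀ x, Γ x) :
    Finsupp.lmapDomain ℂ ℂ (qbar H S) ∘ₗ
        ofMA ℂ (∀ x, Γ x) ((∀ x, Γ x) ⧸ H) g =
      ofMA ℂ _ _ (proj Γ S g) ∘ₗ Finsupp.lmapDomain ℂ ℂ (qbar H S) := by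
  ext φ
  simp only [LinearMap.comp_apply, ofMA_def, Finsupp.lmapDomain_apply,
    Finsupp.lsingle_apply]
  rw [← Finsupp.mapDomain_comp, ← Finsupp.mapDomain_comp]
  have hfun : (qbar H S ∘ fun x => g • x) = ((fun y => proj Γ S g • y) ∘ qbar H S) :=
    funext fun x => qbar_smul H S g x
  rw [hfun]

lemma qmap_ne_zero (φ : ((∀ x, Γ x) ⧸ H) →₀ ℂ)
    (hinv : ∀ k : ∀ x, Γ x, proj Γ S k = 1 → Finsupp.mapDomain (k • ·) φ = φ)
    (hφ : φ ≠ 0) : Finsupp.mapDomain (qbar H S) φ ≠ 0 := by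
  classical
  obtain ⟨x, hx⟩ := Finsupp.ne_iff.mp hφ
  simp only [Finsupp.coe_zero, Pi.zero_apply] at hx
  intro h0
  have hconst : ∀ a ∈ φ.support, qbar H S x = qbar H S a → φ a = φ x := by
    intro a _ ha
    obtain ⟨k, hk1, rfl⟩ := qbar_fiber H S ha
    have := hinv k hk1
    conv_lhs => rw [← this]
    exact Finsupp.mapDomain_apply (MulAction.injective k) φ x
  have heval : Finsupp.mapDomain (qbar H S) φ (qbar H S x) = 0 := by rw [h0]; rfl
  rw [Finsupp.mapDomain, Finsupp.sum_apply] at heval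
  have : (φ.sum fun a v => Finsupp.single (qbar H S a) v (qbar H S x)) =
      ∑ a ∈ φ.support.filter (fun a => qbar H S a = qbar H S x), φ x := by
    rw [Finsupp.sum, Finset.sum_filter]
    refine Finset.sum_congr rfl fun a ha => ?_
    rw [Finsupp.single_apply]
    by_cases h : qbar H S a = qbar H S x
    · rw [if_pos h, if_pos h, hconst a ha h.symm]
    · rw [if_neg h, if_neg h]
  rw [this, Finset.sum_const, nsmul_eq_mul] at heval
  have hxmem : x ∈ φ.support.filter (fun a => qbar H S a = qbar H S x) := by
    simp [Finsupp.mem_support_iff, hx]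
  rcases mul_eq_zero.mp heval with h | h
  · exact (Nat.cast_ne_zero.mpr (Finset.card_ne_zero_of_mem hxmem)) h
  · exact hx h

end aux2

/-- Extension lemma: an irreducible representation `ρ` of
`G_S` occurs in `ℂ[G_S / H_S]` iff its extension `ρ̄ = ρ ∘ π_S` (trivial on the
coordinates outside `S`) occurs in `ℂ[G/H]`. -/
theorem stmt13 {E : Type} [Fintype E] [DecidableEq E]
    (Γ : E → Type) [∀ x, Group (Γ x)] [∀ x, Fintype (Γ x)]
    (H : Subgroup (∀ x, Γ x)) (S : Finset E)
    {V : Type} [AddCommGroup V] [Module ℂ V] [FiniteDimensional ℂ V]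
    (ρ : Representation ℂ (∀ x : S, Γ x) V) (hirr : IsIrred ρ) :
    Occurs ρ
        (Representation.ofMulAction ℂ (∀ x : S, Γ x)
          ((∀ x : S, Γ x) ⧸ Subgroup.map (proj Γ S) H)) ↔
      Occurs (ρ.comp (proj Γ S))
        (Representation.ofMulAction ℂ (∀ x, Γ x) ((∀ x, Γ x) ⧸ H)) := by
  rw [occurs_ofMA, occurs_ofMA]
  constructor
  · rintro ⟨f, hf0, hf⟩
    refine ⟨jmap H S ∘ₗ f, ?_, ?_⟩
    · intro h0
      apply hf0
      refine LinearMap.ext fun v => ?_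
      have h1 : jmap H S (f v) = 0 := by
        rw [← LinearMap.comp_apply, h0]; rfl
      have h2 := jmap_injective H S (by rw [h1, map_zero] : jmap H S (f v) = jmap H S 0)
      simpa using h2
    · intro g
      have h1 := hf (proj Γ S g)
      calc (jmap H S ∘ₗ f) ∘ₗ (ρ.comp (proj Γ S)) g
          = jmap H S ∘ₗ (f ∘ₗ ρ (proj Γ S g)) := by rfl
        _ = jmap H S ∘ₗ (ofMA ℂ _ _ (proj Γ S g) ∘ₗ f) := by rw [h1]
        _ = (jmap H S ∘ₗ ofMA ℂ _ _ (proj Γ S g)) ∘ₗ f := by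
              rw [LinearMap.comp_assoc]
        _ = _ := by rw [jmap_equiv H S g, LinearMap.comp_assoc]
  · rintro ⟨f, hf0, hf⟩
    refine ⟨Finsupp.lmapDomain ℂ ℂ (qbar H S) ∘ₗ f, ?_, ?_⟩
    · intro h0
      obtain ⟨v, hv⟩ : ∃ v, f v ≠ 0 := by
        by_contra h
        push_neg at h
        exact hf0 (LinearMap.ext fun v => h v)
      have hinv : ∀ k : ∀ x, Γ x, proj Γ S k = 1 →
          Finsupp.mapDomain (k • ·) (f v) = f v := by
        intro k hk
        have := congrArg (fun (T : _ →ₗ[ℂ] _) => T v) (hf k)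
        simp only [LinearMap.comp_apply] at this
        rw [ofMA_def, Finsupp.lmapDomain_apply] at this
        rw [← this]
        show f ((ρ.comp (proj Γ S)) k v) = f v
        simp [MonoidHom.comp_apply, hk]
      have := qmap_ne_zero H S (f v) hinv hv
      apply this
      have : (Finsupp.lmapDomain ℂ ℂ (qbar H S) ∘ₗ f) v = 0 := by rw [h0]; rfl
      simpa using this
    · intro gS
      obtain ⟨g, rfl⟩ := proj_surjective S gS
      have h1 := hf g
      calc (Finsupp.lmapDomain ℂ ℂ (qbar H S) ∘ₗ f) ∘ₗ ρ (proj Γ S g)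
          = Finsupp.lmapDomain ℂ ℂ (qbar H S) ∘ₗ
              (f ∘ₗ (ρ.comp (proj Γ S)) g) := by rfl
        _ = Finsupp.lmapDomain ℂ ℂ (qbar H S) ∘ₗ
              (ofMA ℂ (∀ x, Γ x) ((∀ x, Γ x) ⧸ H) g ∘ₗ f) := by rw [h1]
        _ = (Finsupp.lmapDomain ℂ ℂ (qbar H S) ∘ₗ
              ofMA ℂ (∀ x, Γ x) ((∀ x, Γ x) ⧸ H) g) ∘ₗ f := by
              rw [LinearMap.comp_assoc]
        _ = _ := by rw [qmap_equiv H S g, LinearMap.comp_assoc]
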